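/- The Maslov index is additive under composition of domains: if D₁ connects generator x to y and D₂ connects y to z, then for the composite domain D₁ ∘ D₂ (sum of the underlying 2-chains) connecting x to z, M(D₁ ∘ D₂) = M(D₁) + M(D₂), where M(D) = e(D) + n_x(D) + n_y(D) is given by Lipshitz's formula. -/

import Mathlib

/-- Combinatorial model of domains: the plane is cut into unit squares, the
square `(i,j)` being `[i,i+1] × [j,j+1]`, and a domain is a finitely supported
integer multiplicity function on squares. `quadMult D p` is the local corner
multiplicity `n_p(D)`: the average of the multiplicities of `D` in the four
quadrants (squares) around the lattice point `p`. -/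
def quadMult (D : (ℤ × ℤ) →₀ ℤ) (p : ℤ × ℤ) : ℚ :=
  ((D (p.1, p.2) + D (p.1 - 1, p.2) + D (p.1 - 1, p.2 - 1) + D (p.1, p.2 - 1) : ℤ) : ℚ) / 4

/-- `D` connects the generator `x` to the generator `y` (finite sets of lattice
points): at every lattice point the alternating sum of the four quadrant
multiplicities is `1` at points of `x`, `−1` at points of `y`, and `0`
elsewhere. -/
def Connects (D : (ℤ × ℤ) →₀ ℤ) (x y : Finset (ℤ × ℤ)) : Prop :=
  ∀ p : ℤ × ℤ,
    D (p.1, p.2) - D (p.1 - 1, p.2) - D (p.1, p.2 - 1) + D (p.1 - 1, p.2 - 1)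
      = (if p ∈ x then 1 else 0) - (if p ∈ y then 1 else 0)

/-- Lipshitz's Maslov index `M(D) = e(D) + n_x(D) + n_y(D)` of a domain `D`
connecting `x` to `y`, where `e` is the (additive) Euler measure and
`n_x(D) = Σ_{p ∈ x} n_p(D)`. -/
noncomputable def maslovIndex (e : ((ℤ × ℤ) →₀ ℤ) →+ ℚ) (D : (ℤ × ℤ) →₀ ℤ)
    (x y : Finset (ℤ × ℤ)) : ℚ :=
  e D + ∑ p ∈ x, quadMult D p + ∑ p ∈ y, quadMult D p

/-- Auxiliary "correlation" sum `Σ_p A(p) B(p + (u,v))`. -/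
def Fb (A B : (ℤ × ℤ) →₀ ℤ) (u v : ℤ) : ℚ :=
  ∑ p ∈ A.support, (A p : ℚ) * (B (p.1 + u, p.2 + v) : ℚ)

lemma sum_shift (A B : (ℤ × ℤ) →₀ ℤ) (T : Finset (ℤ × ℤ)) (a b c d : ℤ)
    (hT : ∀ q ∈ A.support, ((q.1 - a, q.2 - b) : ℤ × ℤ) ∈ T) :
    ∑ p ∈ T, (A (p.1 + a, p.2 + b) : ℚ) * (B (p.1 + c, p.2 + d) : ℚ)
      = Fb A B (c - a) (d - b) := by
  classical
  have hinj : ∀ p ∈ T, ∀ q ∈ T,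
      ((p.1 + a, p.2 + b) : ℤ × ℤ) = (q.1 + a, q.2 + b) → p = q := by
    intro p _ q _ h
    simp only [Prod.mk.injEq] at h
    exact Prod.ext (by omega) (by omega)
  have h1 : ∑ p ∈ T, (A (p.1 + a, p.2 + b) : ℚ) * (B (p.1 + c, p.2 + d) : ℚ)
      = ∑ q ∈ T.image (fun p : ℤ × ℤ => ((p.1 + a, p.2 + b) : ℤ × ℤ)),
          (A q : ℚ) * (B (q.1 + (c - a), q.2 + (d - b)) : ℚ) := by
    rw [Finset.sum_image hinj]
    apply Finset.sum_congr rfl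
    intro p _
    have h2 : ((p.1 + a + (c - a), p.2 + b + (d - b)) : ℤ × ℤ) = (p.1 + c, p.2 + d) := by
      simp only [Prod.mk.injEq]; constructor <;> ring
    rw [h2]
  rw [h1, Fb]
  apply (Finset.sum_subset ?_ ?_).symm
  · intro q hq
    refine Finset.mem_image.2 ⟨(q.1 - a, q.2 - b), hT q hq, ?_⟩
    exact Prod.ext (by simp) (by simp)
  · intro q _ hq
    rw [Finsupp.notMem_support_iff.mp hq]
    simp

lemma Fb_swap (A B : (ℤ × ℤ) →₀ ℤ) (u v : ℤ) : Fb A B u v = Fb B A (-u) (-v) := by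
  classical
  have h1 : Fb A B u v
      = ∑ p ∈ A.support.filter (fun p : ℤ × ℤ => ((p.1 + u, p.2 + v) : ℤ × ℤ) ∈ B.support),
          (A p : ℚ) * (B (p.1 + u, p.2 + v) : ℚ) := by
    refine (Finset.sum_filter_of_ne ?_).symm
    intro p _ h
    by_contra hc
    rw [Finsupp.notMem_support_iff.mp hc] at h
    simp at h
  have h2 : Fb B A (-u) (-v)
      = ∑ p ∈ B.support.filter (fun p : ℤ × ℤ => ((p.1 + -u, p.2 + -v) : ℤ × ℤ) ∈ A.support),
          (B p : ℚ) * (A (p.1 + -u, p.2 + -v) : ℚ) := by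
    refine (Finset.sum_filter_of_ne ?_).symm
    intro p _ h
    by_contra hc
    rw [Finsupp.notMem_support_iff.mp hc] at h
    simp at h
  rw [h1, h2]
  refine Finset.sum_nbij' (fun p : ℤ × ℤ => ((p.1 + u, p.2 + v) : ℤ × ℤ))
      (fun p : ℤ × ℤ => ((p.1 + -u, p.2 + -v) : ℤ × ℤ)) ?_ ?_ ?_ ?_ ?_
  · intro p hp
    simp only [Finset.mem_filter] at hp ⊢
    refine ⟨hp.2, ?_⟩
    have h3 : ((p.1 + u + -u, p.2 + v + -v) : ℤ × ℤ) = p := Prod.ext (by simp) (by simp)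
    rw [h3]
    exact hp.1
  · intro p hp
    simp only [Finset.mem_filter] at hp ⊢
    refine ⟨hp.2, ?_⟩
    have h3 : ((p.1 + -u + u, p.2 + -v + v) : ℤ × ℤ) = p := Prod.ext (by simp) (by simp)
    rw [h3]
    exact hp.1
  · intro p _
    exact Prod.ext (by simp) (by simp)
  · intro p _
    exact Prod.ext (by simp) (by simp)
  · intro p _
    have h3 : ((p.1 + u + -u, p.2 + v + -v) : ℤ × ℤ) = p := Prod.ext (by simp) (by simp)
    simp only [h3]
    ring

/-- **Additivity of the Maslov index under composition of domains**: if `D₁`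
connects `x` to `y` and `D₂` connects `y` to `z`, then for the composite domain
`D₁ ∘ D₂ = D₁ + D₂` (sum of the underlying 2-chains) connecting `x` to `z`,
`M(D₁ ∘ D₂) = M(D₁) + M(D₂)`. -/
theorem maslov_index_additive (e : ((ℤ × ℤ) →₀ ℤ) →+ ℚ)
    (D₁ D₂ : (ℤ × ℤ) →₀ ℤ) (x y z : Finset (ℤ × ℤ))
    (h₁ : Connects D₁ x y) (h₂ : Connects D₂ y z) :
    maslovIndex e (D₁ + D₂) x z = maslovIndex e D₁ x y + maslovIndex e D₂ y z := by
  classical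
  set S : Finset (ℤ × ℤ) := (D₁.support ∪ D₂.support).biUnion
      (fun q => {q, (q.1 + 1, q.2), (q.1, q.2 + 1), (q.1 + 1, q.2 + 1)}) with hS
  set T : Finset (ℤ × ℤ) := x ∪ y ∪ z ∪ S with hT
  have hxT : x ⊆ T := by intro p hp; simp [hT, hp]
  have hyT : y ⊆ T := by intro p hp; simp [hT, hp]
  have hzT : z ⊆ T := by intro p hp; simp [hT, hp]
  -- neighborhood of the supports is in T
  have hnb : ∀ q : ℤ × ℤ, q ∈ D₁.support ∪ D₂.support → ∀ a b : ℤ,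
      (a = 0 ∨ a = -1) → (b = 0 ∨ b = -1) → ((q.1 - a, q.2 - b) : ℤ × ℤ) ∈ T := by
    intro q hq a b ha hb
    have hmem : ((q.1 - a, q.2 - b) : ℤ × ℤ) ∈ S := by
      rw [hS]
      refine Finset.mem_biUnion.2 ⟨q, hq, ?_⟩
      rcases ha with rfl | rfl <;> rcases hb with rfl | rfl <;>
        simp [Prod.ext_iff]
    simp [hT, hmem]
  have hD₁nb : ∀ a b : ℤ, (a = 0 ∨ a = -1) → (b = 0 ∨ b = -1) →
      ∀ q ∈ D₁.support, ((q.1 - a, q.2 - b) : ℤ × ℤ) ∈ T :=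
    fun a b ha hb q hq => hnb q (Finset.mem_union_left _ hq) a b ha hb
  have hD₂nb : ∀ a b : ℤ, (a = 0 ∨ a = -1) → (b = 0 ∨ b = -1) →
      ∀ q ∈ D₂.support, ((q.1 - a, q.2 - b) : ℤ × ℤ) ∈ T :=
    fun a b ha hb q hq => hnb q (Finset.mem_union_right _ hq) a b ha hb
  -- the main computational step
  have step : ∀ D E : (ℤ × ℤ) →₀ ℤ,
      (∀ a b : ℤ, (a = 0 ∨ a = -1) → (b = 0 ∨ b = -1) →
        ∀ q ∈ D.support, ((q.1 - a, q.2 - b) : ℤ × ℤ) ∈ T) →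
      ∑ p ∈ T, ((D (p.1, p.2) - D (p.1 - 1, p.2) - D (p.1, p.2 - 1)
          + D (p.1 - 1, p.2 - 1) : ℤ) : ℚ) * quadMult E p
        = (1/4) * (Fb D E 1 1 - Fb D E 1 (-1) - Fb D E (-1) 1 + Fb D E (-1) (-1)) := by
    intro D E hD
    have hss : ∀ a b c d : ℤ, (a = 0 ∨ a = -1) → (b = 0 ∨ b = -1) →
        ∑ p ∈ T, (D (p.1 + a, p.2 + b) : ℚ) * (E (p.1 + c, p.2 + d) : ℚ)
          = Fb D E (c - a) (d - b) :=
      fun a b c d ha hb => sum_shift D E T a b c d (hD a b ha hb)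
    have expand : ∑ p ∈ T, ((D (p.1, p.2) - D (p.1 - 1, p.2) - D (p.1, p.2 - 1)
          + D (p.1 - 1, p.2 - 1) : ℤ) : ℚ) * quadMult E p
        = (1/4) * (
            ∑ p ∈ T, (D (p.1 + 0, p.2 + 0) : ℚ) * (E (p.1 + 0, p.2 + 0) : ℚ)
          + ∑ p ∈ T, (D (p.1 + 0, p.2 + 0) : ℚ) * (E (p.1 + (-1), p.2 + 0) : ℚ)
          + ∑ p ∈ T, (D (p.1 + 0, p.2 + 0) : ℚ) * (E (p.1 + 0, p.2 + (-1)) : ℚ)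
          + ∑ p ∈ T, (D (p.1 + 0, p.2 + 0) : ℚ) * (E (p.1 + (-1), p.2 + (-1)) : ℚ)
          - ∑ p ∈ T, (D (p.1 + (-1), p.2 + 0) : ℚ) * (E (p.1 + 0, p.2 + 0) : ℚ)
          - ∑ p ∈ T, (D (p.1 + (-1), p.2 + 0) : ℚ) * (E (p.1 + (-1), p.2 + 0) : ℚ)
          - ∑ p ∈ T, (D (p.1 + (-1), p.2 + 0) : ℚ) * (E (p.1 + 0, p.2 + (-1)) : ℚ)
          - ∑ p ∈ T, (D (p.1 + (-1), p.2 + 0) : ℚ) * (E (p.1 + (-1), p.2 + (-1)) : ℚ)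
          - ∑ p ∈ T, (D (p.1 + 0, p.2 + (-1)) : ℚ) * (E (p.1 + 0, p.2 + 0) : ℚ)
          - ∑ p ∈ T, (D (p.1 + 0, p.2 + (-1)) : ℚ) * (E (p.1 + (-1), p.2 + 0) : ℚ)
          - ∑ p ∈ T, (D (p.1 + 0, p.2 + (-1)) : ℚ) * (E (p.1 + 0, p.2 + (-1)) : ℚ)
          - ∑ p ∈ T, (D (p.1 + 0, p.2 + (-1)) : ℚ) * (E (p.1 + (-1), p.2 + (-1)) : ℚ)
          + ∑ p ∈ T, (D (p.1 + (-1), p.2 + (-1)) : ℚ) * (E (p.1 + 0, p.2 + 0) : ℚ)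
          + ∑ p ∈ T, (D (p.1 + (-1), p.2 + (-1)) : ℚ) * (E (p.1 + (-1), p.2 + 0) : ℚ)
          + ∑ p ∈ T, (D (p.1 + (-1), p.2 + (-1)) : ℚ) * (E (p.1 + 0, p.2 + (-1)) : ℚ)
          + ∑ p ∈ T, (D (p.1 + (-1), p.2 + (-1)) : ℚ) * (E (p.1 + (-1), p.2 + (-1)) : ℚ)) := by
      rw [← Finset.sum_add_distrib, ← Finset.sum_add_distrib, ← Finset.sum_add_distrib,
          ← Finset.sum_sub_distrib, ← Finset.sum_sub_distrib, ← Finset.sum_sub_distrib,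
          ← Finset.sum_sub_distrib, ← Finset.sum_sub_distrib, ← Finset.sum_sub_distrib,
          ← Finset.sum_sub_distrib, ← Finset.sum_sub_distrib, ← Finset.sum_add_distrib,
          ← Finset.sum_add_distrib, ← Finset.sum_add_distrib, ← Finset.sum_add_distrib,
          Finset.mul_sum]
      apply Finset.sum_congr rfl
      intro p _
      have e1 : ∀ w : ℤ, w + (-1) = w - 1 := fun w => by ring
      simp only [e1, add_zero, quadMult]
      push_cast
      ring
    rw [expand,
        hss 0 0 0 0 (Or.inl rfl) (Or.inl rfl),
        hss 0 0 (-1) 0 (Or.inl rfl) (Or.inl rfl),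
        hss 0 0 0 (-1) (Or.inl rfl) (Or.inl rfl),
        hss 0 0 (-1) (-1) (Or.inl rfl) (Or.inl rfl),
        hss (-1) 0 0 0 (Or.inr rfl) (Or.inl rfl),
        hss (-1) 0 (-1) 0 (Or.inr rfl) (Or.inl rfl),
        hss (-1) 0 0 (-1) (Or.inr rfl) (Or.inl rfl),
        hss (-1) 0 (-1) (-1) (Or.inr rfl) (Or.inl rfl),
        hss 0 (-1) 0 0 (Or.inl rfl) (Or.inr rfl),
        hss 0 (-1) (-1) 0 (Or.inl rfl) (Or.inr rfl),
        hss 0 (-1) 0 (-1) (Or.inl rfl) (Or.inr rfl),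
        hss 0 (-1) (-1) (-1) (Or.inl rfl) (Or.inr rfl),
        hss (-1) (-1) 0 0 (Or.inr rfl) (Or.inr rfl),
        hss (-1) (-1) (-1) 0 (Or.inr rfl) (Or.inr rfl),
        hss (-1) (-1) 0 (-1) (Or.inr rfl) (Or.inr rfl),
        hss (-1) (-1) (-1) (-1) (Or.inr rfl) (Or.inr rfl)]
    norm_num
    ring
  -- turning generator sums into sums over T
  have gensum : ∀ (w : Finset (ℤ × ℤ)) (f : ℤ × ℤ → ℚ), w ⊆ T →
      ∑ p ∈ T, (if p ∈ w then (1:ℚ) else 0) * f p = ∑ p ∈ w, f p := by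
    intro w f hw
    simp only [ite_mul, one_mul, zero_mul]
    rw [Finset.sum_ite_mem, Finset.inter_eq_right.2 hw]
  -- the key identity
  have keyId : ∑ p ∈ x, quadMult D₂ p - ∑ p ∈ y, quadMult D₂ p
      = ∑ p ∈ y, quadMult D₁ p - ∑ p ∈ z, quadMult D₁ p := by
    have conv₁ : ∀ (D : (ℤ × ℤ) →₀ ℤ) (w w' : Finset (ℤ × ℤ)) (E : (ℤ × ℤ) →₀ ℤ),
        Connects D w w' → w ⊆ T → w' ⊆ T →
        ∑ p ∈ w, quadMult E p - ∑ p ∈ w', quadMult E p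
          = ∑ p ∈ T, ((D (p.1, p.2) - D (p.1 - 1, p.2) - D (p.1, p.2 - 1)
              + D (p.1 - 1, p.2 - 1) : ℤ) : ℚ) * quadMult E p := by
      intro D w w' E hC hw hw'
      rw [← gensum w _ hw, ← gensum w' _ hw', ← Finset.sum_sub_distrib]
      apply Finset.sum_congr rfl
      intro p _
      rw [hC p]
      push_cast
      split_ifs <;> ring
    rw [conv₁ D₁ x y D₂ h₁ hxT hyT, conv₁ D₂ y z D₁ h₂ hyT hzT,
        step D₁ D₂ hD₁nb, step D₂ D₁ hD₂nb,
        Fb_swap D₁ D₂ 1 1, Fb_swap D₁ D₂ 1 (-1), Fb_swap D₁ D₂ (-1) 1,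
        Fb_swap D₁ D₂ (-1) (-1)]
    norm_num
    ring
  -- assembling
  have hqm : ∀ w : Finset (ℤ × ℤ),
      ∑ p ∈ w, quadMult (D₁ + D₂) p = ∑ p ∈ w, quadMult D₁ p + ∑ p ∈ w, quadMult D₂ p := by
    intro w
    rw [← Finset.sum_add_distrib]
    apply Finset.sum_congr rfl
    intro p _
    simp only [quadMult, Finsupp.add_apply]
    push_cast
    ring
  unfold maslovIndex
  rw [map_add, hqm x, hqm z]
  linear_combination keyId
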